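/- There exists at least one steady state of the two-population NNLIF system with refractory states, i.e., there exists a pair (N_E, N_I) with 0 < N_E < 1/τ_E and 0 < N_I < 1/τ_I satisfying N_E·(τ_E + I_1(N_E,N_I)) = 1 and N_I·(τ_I + I_2(N_E,N_I)) = 1. (Indeed, with N_I(N_E) the unique solution of the second equation for each N_E ≥ 0, the function F(N_E) := N_E(τ_E + I_1(N_E,N_I(N_E))) is continuous on [0,1/τ_E], with F(0)=0 and F(1/τ_E) > 1, so F takes the value 1 on (0,1/τ_E).) -/

import Mathlib

/-- K(w_R, w_F) := ∫_0^∞ (e^{-s²/2}/s)(e^{s·w_F} − e^{s·w_R}) ds (Lebesgue integral on (0,∞)). -/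
noncomputable def K (wR wF : ℝ) : ℝ :=
  ∫ s in Set.Ioi (0 : ℝ), Real.exp (-s ^ 2 / 2) / s * (Real.exp (s * wF) - Real.exp (s * wR))

/-- I₁(N_E,N_I) with V_0^E(N_E,N_I) := b_E^E N_E − b_I^E N_I + (b_E^E − b_E^E) ν_{E,ext}. -/
noncomputable def I1 (VR VF bEE bIE aE ν NE NI : ℝ) : ℝ :=
  K ((VR - (bEE * NE - bIE * NI + (bEE - bEE) * ν)) / Real.sqrt aE)
    ((VF - (bEE * NE - bIE * NI + (bEE - bEE) * ν)) / Real.sqrt aE)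

/-- I₂(N_E,N_I) with V_0^I(N_E,N_I) := b_E^I N_E − b_I^I N_I + (b_E^I − b_E^E) ν_{E,ext}. -/
noncomputable def I2 (VR VF bEE bEI bII aI ν NE NI : ℝ) : ℝ :=
  K ((VR - (bEI * NE - bII * NI + (bEI - bEE) * ν)) / Real.sqrt aI)
    ((VF - (bEI * NE - bII * NI + (bEI - bEE) * ν)) / Real.sqrt aI)

open MeasureTheory Set Real


noncomputable def Kf (a b s : ℝ) : ℝ :=
  Real.exp (-s ^ 2 / 2) / s * (Real.exp (s * b) - Real.exp (s * a))

lemma Kf_nonneg {a b : ℝ} (hab : a ≤ b) {s : ℝ} (hs : 0 < s) : 0 ≤ Kf a b s := by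
  have h1 : Real.exp (s * a) ≤ Real.exp (s * b) :=
    Real.exp_le_exp.2 (by nlinarith)
  have h2 : 0 ≤ Real.exp (-s ^ 2 / 2) / s := by positivity
  unfold Kf; nlinarith

lemma Kf_pos {a b : ℝ} (hab : a < b) {s : ℝ} (hs : 0 < s) : 0 < Kf a b s := by
  have h1 : Real.exp (s * a) < Real.exp (s * b) :=
    Real.exp_lt_exp.2 (by nlinarith)
  have h2 : 0 < Real.exp (-s ^ 2 / 2) / s := by positivity
  unfold Kf; nlinarith

lemma Kf_le {a b : ℝ} (hab : a ≤ b) {s : ℝ} (hs : 0 < s) :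
    Kf a b s ≤ (b - a) * Real.exp (s * b - s ^ 2 / 2) := by
  have key : Real.exp (s * b) - Real.exp (s * a) ≤ s * (b - a) * Real.exp (s * b) := by
    have h := Real.add_one_le_exp (s * a - s * b)
    have h2 : Real.exp (s * a - s * b) * Real.exp (s * b) = Real.exp (s * a) := by
      rw [← Real.exp_add]; ring_nf
    nlinarith [mul_le_mul_of_nonneg_right h (Real.exp_pos (s * b)).le]
  have h2 : 0 ≤ Real.exp (-s ^ 2 / 2) / s := by positivity
  have hsne : s ≠ 0 := ne_of_gt hs
  calc Kf a b s ≤ Real.exp (-s ^ 2 / 2) / s * (s * (b - a) * Real.exp (s * b)) :=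
        mul_le_mul_of_nonneg_left key h2
    _ = (b - a) * (Real.exp (-s ^ 2 / 2) * Real.exp (s * b)) := by
        field_simp
    _ = (b - a) * Real.exp (s * b - s ^ 2 / 2) := by rw [← Real.exp_add]; ring_nf

lemma gauss_integrable (c : ℝ) : Integrable (fun s : ℝ => Real.exp (s * c - s ^ 2 / 2)) := by
  have h : Integrable (fun x : ℝ => Real.exp (-(1/2 : ℝ) * x ^ 2)) :=
    integrable_exp_neg_mul_sq (by norm_num)
  have h2 := (h.comp_sub_right c).const_mul (Real.exp (c ^ 2 / 2))
  refine h2.congr ?_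
  filter_upwards with x
  rw [← Real.exp_add]
  ring_nf

lemma Kf_contOn (a b : ℝ) : ContinuousOn (Kf a b) (Set.Ioi 0) := by
  apply ContinuousOn.mul
  · exact ContinuousOn.div (by fun_prop) continuousOn_id (fun s hs => ne_of_gt hs)
  · fun_prop

lemma Kf_integrable {a b : ℝ} (hab : a ≤ b) : IntegrableOn (Kf a b) (Set.Ioi 0) := by
  have hb : Integrable (fun s : ℝ => (b - a) * Real.exp (s * b - s ^ 2 / 2)) :=
    (gauss_integrable b).const_mul _
  refine Integrable.mono (hb.integrableOn)
    ((Kf_contOn a b).aestronglyMeasurable measurableSet_Ioi) ?_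
  rw [ae_restrict_iff' measurableSet_Ioi]
  filter_upwards with s hs
  rw [Real.norm_eq_abs, Real.norm_eq_abs, abs_of_nonneg (Kf_nonneg hab hs),
    abs_of_nonneg (mul_nonneg (sub_nonneg.2 hab) (Real.exp_pos _).le)]
  exact Kf_le hab hs

/- STATEMENT 6: There exists at least one steady state of the two-population NNLIF system
with refractory states, i.e., there exists (N_E, N_I) with 0 < N_E < 1/τ_E and
0 < N_I < 1/τ_I satisfying N_E·(τ_E + I_1(N_E,N_I)) = 1 and N_I·(τ_I + I_2(N_E,N_I)) = 1. -/

lemma K_eq (a b : ℝ) : K a b = ∫ s in Set.Ioi (0 : ℝ), Kf a b s := rfl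

lemma integral_pos_on_Ioi {f : ℝ → ℝ} (hi : IntegrableOn f (Set.Ioi 0))
    (hpos : ∀ s ∈ Set.Ioi (0 : ℝ), 0 < f s) : 0 < ∫ s in Set.Ioi (0 : ℝ), f s := by
  rw [setIntegral_pos_iff_support_of_nonneg_ae ?_ hi]
  · refine lt_of_lt_of_le ?_ (measure_mono (fun s hs => ⟨ne_of_gt (hpos s hs), hs⟩ :
      Set.Ioi (0:ℝ) ⊆ Function.support f ∩ Set.Ioi 0))
    simp [Real.volume_Ioi]
  · rw [Filter.EventuallyLE, ae_restrict_iff' measurableSet_Ioi]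
    filter_upwards with s hs
    exact (hpos s hs).le

lemma K_pos {a b : ℝ} (hab : a < b) : 0 < K a b :=
  integral_pos_on_Ioi (Kf_integrable hab.le) (fun s hs => Kf_pos hab hs)

lemma K_shift_strictMono {d : ℝ} (hd : 0 < d) : StrictMono (fun t => K t (t + d)) := by
  intro t1 t2 ht
  have h1 := Kf_integrable (by linarith : t1 ≤ t1 + d)
  have h2 := Kf_integrable (by linarith : t2 ≤ t2 + d)
  have key : 0 < ∫ s in Set.Ioi (0:ℝ), (Kf t2 (t2 + d) s - Kf t1 (t1 + d) s) := by
    refine integral_pos_on_Ioi (h2.sub h1) (fun s hs => ?_)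
    have hs' : (0:ℝ) < s := hs
    have e1 : Real.exp (s * t1) < Real.exp (s * t2) := Real.exp_lt_exp.2 (by nlinarith)
    have e2 : (1:ℝ) < Real.exp (s * d) := by
      rw [show (1:ℝ) = Real.exp 0 by simp]; exact Real.exp_lt_exp.2 (by nlinarith)
    have h3 : 0 < Real.exp (-s ^ 2 / 2) / s := by positivity
    have expand : Kf t2 (t2 + d) s - Kf t1 (t1 + d) s
        = Real.exp (-s ^ 2 / 2) / s * ((Real.exp (s * d) - 1) * (Real.exp (s * t2) - Real.exp (s * t1))) := by
      unfold Kf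
      rw [show s * (t2 + d) = s * t2 + s * d by ring, show s * (t1 + d) = s * t1 + s * d by ring,
        Real.exp_add, Real.exp_add]
      ring
    rw [expand]
    have : 0 < (Real.exp (s * d) - 1) * (Real.exp (s * t2) - Real.exp (s * t1)) := by nlinarith
    positivity
  rw [integral_sub h2 h1] at key
  simpa [K_eq] using sub_pos.1 key

lemma K_shift_continuous {d : ℝ} (hd : 0 < d) : Continuous (fun t => K t (t + d)) := by
  rw [continuous_iff_continuousAt]
  intro t0
  have : ContinuousAt (fun t => ∫ s, Kf t (t + d) s ∂(volume.restrict (Set.Ioi (0:ℝ)))) t0 := by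
    apply continuousAt_of_dominated (bound := fun s => d * Real.exp (s * (|t0| + 1 + d) - s ^ 2 / 2))
    · filter_upwards with t
      exact ((Kf_contOn t (t + d)).aestronglyMeasurable measurableSet_Ioi)
    · filter_upwards [Metric.ball_mem_nhds t0 one_pos] with t ht
      rw [ae_restrict_iff' measurableSet_Ioi]
      filter_upwards with s hs
      have hs' : (0:ℝ) < s := hs
      have htb : t + d ≤ |t0| + 1 + d := by
        have := abs_lt.1 (mem_ball_iff_norm.1 ht)
        have := abs_le.1 (le_refl |t0|)
        have := le_abs_self t0
        linarith [abs_lt.1 (mem_ball_iff_norm.1 ht), le_abs_self t0]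
      rw [Real.norm_eq_abs, abs_of_nonneg (Kf_nonneg (by linarith) hs')]
      calc Kf t (t + d) s ≤ (t + d - t) * Real.exp (s * (t + d) - s ^ 2 / 2) :=
            Kf_le (by linarith) hs'
        _ ≤ d * Real.exp (s * (|t0| + 1 + d) - s ^ 2 / 2) := by
            rw [show t + d - t = d by ring]
            exact mul_le_mul_of_nonneg_left
              (Real.exp_le_exp.2 (by nlinarith)) hd.le
    · exact (((gauss_integrable (|t0| + 1 + d)).const_mul d)).integrableOn
    · rw [ae_restrict_iff' measurableSet_Ioi]
      filter_upwards with s hs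
      have hs' : (0:ℝ) < s := hs
      unfold Kf
      fun_prop
  exact this

lemma K_arg (V0 VR VF a : ℝ) :
    (VF - V0) / Real.sqrt a = (VR - V0) / Real.sqrt a + (VF - VR) / Real.sqrt a := by
  rw [← add_div]; ring_nf

theorem exists_steady_state (VR VF bEE bIE bEI bII τE τI aE aI ν : ℝ)
    (hV : VR < VF) (hbEE : 0 < bEE) (hbIE : 0 < bIE) (hbEI : 0 < bEI) (hbII : 0 < bII)
    (hτE : 0 < τE) (hτI : 0 < τI) (haE : 0 < aE) (haI : 0 < aI) (hν : 0 ≤ ν) :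
    ∃ NE NI : ℝ, NE ∈ Set.Ioo 0 (1 / τE) ∧ NI ∈ Set.Ioo 0 (1 / τI) ∧
      NE * (τE + I1 VR VF bEE bIE aE ν NE NI) = 1 ∧
      NI * (τI + I2 VR VF bEE bEI bII aI ν NE NI) = 1 := by
  have hsE : 0 < Real.sqrt aE := Real.sqrt_pos.2 haE
  have hsI : 0 < Real.sqrt aI := Real.sqrt_pos.2 haI
  set dE : ℝ := (VF - VR) / Real.sqrt aE with hdE_def
  set dI : ℝ := (VF - VR) / Real.sqrt aI with hdI_def
  have hdE : 0 < dE := div_pos (sub_pos.2 hV) hsE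
  have hdI : 0 < dI := div_pos (sub_pos.2 hV) hsI
  set φE : ℝ → ℝ := fun t => K t (t + dE) with hφE_def
  set φI : ℝ → ℝ := fun t => K t (t + dI) with hφI_def
  have hφEp : ∀ t, 0 < φE t := fun t => K_pos (by linarith)
  have hφIp : ∀ t, 0 < φI t := fun t => K_pos (by linarith)
  have hφEc : Continuous φE := K_shift_continuous hdE
  have hφIc : Continuous φI := K_shift_continuous hdI
  have hφIm : StrictMono φI := K_shift_strictMono hdI
  set wI : ℝ → ℝ → ℝ :=
    fun NE NI => (VR - (bEI * NE - bII * NI + (bEI - bEE) * ν)) / Real.sqrt aI with hwI_def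
  set g : ℝ → ℝ → ℝ := fun NE NI => NI * (τI + φI (wI NE NI)) with hg_def
  -- I2 in terms of g
  have hI2 : ∀ NE NI, τI + I2 VR VF bEE bEI bII aI ν NE NI = τI + φI (wI NE NI) := by
    intro NE NI
    have : I2 VR VF bEE bEI bII aI ν NE NI = φI (wI NE NI) := by
      show K _ _ = K _ _
      congr 1
      exact K_arg _ _ _ _
    rw [this]
  -- monotonicity of g in second variable (on nonnegatives)
  have hgmono : ∀ NE : ℝ, ∀ {x y : ℝ}, 0 ≤ x → x < y → g NE x < g NE y := by
    intro NE x y hx hxy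
    have hw : wI NE x ≤ wI NE y := by
      apply (div_le_div_iff_of_pos_right hsI).2
      nlinarith
    have hK : φI (wI NE x) ≤ φI (wI NE y) := hφIm.monotone hw
    have hp : 0 < τI + φI (wI NE y) := by linarith [hφIp (wI NE y)]
    calc g NE x = x * (τI + φI (wI NE x)) := rfl
      _ ≤ x * (τI + φI (wI NE y)) := mul_le_mul_of_nonneg_left (by linarith) hx
      _ < y * (τI + φI (wI NE y)) := mul_lt_mul_of_pos_right hxy hp
      _ = g NE y := rfl
  -- continuity of g
  have hwIc : Continuous (fun p : ℝ × ℝ => wI p.1 p.2) := by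
    apply Continuous.div_const
    fun_prop
  have hgc : Continuous (fun p : ℝ × ℝ => g p.1 p.2) := by
    apply Continuous.mul continuous_snd
    exact continuous_const.add (hφIc.comp hwIc)
  -- existence of the root N_I(N_E)
  have hex : ∀ NE : ℝ, ∃ NI ∈ Set.Ioo 0 (1 / τI), g NE NI = 1 := by
    intro NE
    have hgc1 : Continuous (g NE) := by
      have : (g NE) = (fun p : ℝ × ℝ => g p.1 p.2) ∘ (fun NI => (NE, NI)) := rfl
      rw [this]
      exact hgc.comp (by fun_prop)
    have h0 : g NE 0 = 0 := by simp [hg_def]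
    have h1 : 1 < g NE (1 / τI) := by
      have hφ := hφIp (wI NE (1 / τI))
      have hinv : 0 < 1 / τI := by positivity
      have : g NE (1 / τI) = 1 / τI * τI + 1 / τI * φI (wI NE (1 / τI)) := by
        show (1 / τI) * (τI + _) = _
        ring
      rw [this, one_div_mul_cancel (ne_of_gt hτI)]
      nlinarith
    have hsub := intermediate_value_Ioo (by positivity : (0:ℝ) ≤ 1 / τI) hgc1.continuousOn
    have h1mem : (1:ℝ) ∈ Set.Ioo (g NE 0) (g NE (1 / τI)) := by
      rw [h0]; exact ⟨one_pos, h1⟩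
    obtain ⟨NI, hNI, hroot⟩ := hsub h1mem
    exact ⟨NI, hNI, hroot⟩
  choose N hNmem hNroot using hex
  -- continuity of N
  have hNc : Continuous N := by
    rw [continuous_iff_continuousAt]
    intro x0
    rw [ContinuousAt, Metric.tendsto_nhds]
    intro ε hε
    set y0 := N x0 with hy0_def
    obtain ⟨hy0pos, hy0lt⟩ := hNmem x0
    set ε' : ℝ := min (ε / 2) (y0 / 2) with hε'_def
    have hε'pos : 0 < ε' := lt_min (by linarith) (by linarith)
    have hε'le : ε' ≤ ε / 2 := min_le_left _ _
    have hε'y : ε' ≤ y0 / 2 := min_le_right _ _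
    have h1 : g x0 (y0 - ε') < 1 := by
      rw [← hNroot x0]
      exact hgmono x0 (by linarith) (by linarith)
    have h2 : 1 < g x0 (y0 + ε') := by
      rw [← hNroot x0]
      exact hgmono x0 (by linarith) (by linarith)
    have hc1 : Continuous (fun u => g u (y0 - ε')) := by
      have : (fun u => g u (y0 - ε')) = (fun p : ℝ × ℝ => g p.1 p.2) ∘ (fun u => (u, y0 - ε')) := rfl
      rw [this]; exact hgc.comp (by fun_prop)
    have hc2 : Continuous (fun u => g u (y0 + ε')) := by
      have : (fun u => g u (y0 + ε')) = (fun p : ℝ × ℝ => g p.1 p.2) ∘ (fun u => (u, y0 + ε')) := rfl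
      rw [this]; exact hgc.comp (by fun_prop)
    have ev1 : ∀ᶠ u in nhds x0, g u (y0 - ε') < 1 :=
      hc1.continuousAt.eventually_lt continuousAt_const h1
    have ev2 : ∀ᶠ u in nhds x0, 1 < g u (y0 + ε') :=
      continuousAt_const.eventually_lt hc2.continuousAt h2
    filter_upwards [ev1, ev2] with u hu1 hu2
    have hNu := hNmem u
    have hlow : y0 - ε' < N u := by
      by_contra hcon
      push_neg at hcon
      rcases eq_or_lt_of_le hcon with heq | hlt
      · rw [← hNroot u, heq] at hu1; exact absurd hu1 (lt_irrefl _)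
      · have := hgmono u hNu.1.le hlt
        rw [hNroot u] at this
        linarith
    have hhigh : N u < y0 + ε' := by
      by_contra hcon
      push_neg at hcon
      rcases eq_or_lt_of_le hcon with heq | hlt
      · rw [← hNroot u, ← heq] at hu2; exact absurd hu2 (lt_irrefl _)
      · have := hgmono u (by linarith) hlt
        rw [hNroot u] at this
        linarith
    rw [Real.dist_eq, abs_lt]
    constructor <;> [linarith; linarith]
  -- the function F for the outer IVT
  set wE : ℝ → ℝ :=
    fun NE => (VR - (bEE * NE - bIE * N NE + (bEE - bEE) * ν)) / Real.sqrt aE with hwE_def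
  have hI1 : ∀ NE, τE + I1 VR VF bEE bIE aE ν NE (N NE) = τE + φE (wE NE) := by
    intro NE
    have : I1 VR VF bEE bIE aE ν NE (N NE) = φE (wE NE) := by
      show K _ _ = K _ _
      congr 1
      exact K_arg _ _ _ _
    rw [this]
  set F : ℝ → ℝ := fun NE => NE * (τE + φE (wE NE)) with hF_def
  have hwEc : Continuous wE := by
    apply Continuous.div_const
    apply Continuous.sub continuous_const
    apply Continuous.add ?_ continuous_const
    exact ((continuous_const.mul continuous_id).sub (continuous_const.mul hNc))
  have hFc : Continuous F :=
    continuous_id.mul (continuous_const.add (hφEc.comp hwEc))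
  have hF0 : F 0 = 0 := by simp [hF_def]
  have hF1 : 1 < F (1 / τE) := by
    have hφ := hφEp (wE (1 / τE))
    have hinv : 0 < 1 / τE := by positivity
    have : F (1 / τE) = 1 / τE * τE + 1 / τE * φE (wE (1 / τE)) := by
      show (1 / τE) * (τE + _) = _
      ring
    rw [this, one_div_mul_cancel (ne_of_gt hτE)]
    nlinarith
  have hsub := intermediate_value_Ioo (by positivity : (0:ℝ) ≤ 1 / τE) hFc.continuousOn
  have h1mem : (1:ℝ) ∈ Set.Ioo (F 0) (F (1 / τE)) := by
    rw [hF0]; exact ⟨one_pos, hF1⟩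
  obtain ⟨NE0, hNE0, hFroot⟩ := hsub h1mem
  refine ⟨NE0, N NE0, hNE0, hNmem NE0, ?_, ?_⟩
  · rw [hI1 NE0]; exact hFroot
  · rw [hI2 NE0 (N NE0)]; exact hNroot NE0
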